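/- On the unit circle parametrization of the highest weight spherical harmonics: for the functions e_n(x₁,x₂,x') = (x₁+ix₂)^n on 𝕊², the ratio ‖e_p · e_q‖_{L²(𝕊²)} / (‖e_p‖_{L²(𝕊²)} ‖e_q‖_{L²(𝕊²)}) is bounded below by c·min(p,q)^{1/4} for some absolute constant c > 0 and all integers p, q ≥ 1. -/

import Mathlib

open MeasureTheory Complex Set Real Metric Nat

noncomputable abbrev E3' : Type := EuclideanSpace ℝ (Fin 3)
noncomputable abbrev E2' : Type := EuclideanSpace ℝ (Fin 2)
noncomputable abbrev sphMeas' : Measure (Metric.sphere (0 : E3') 1) :=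
  (volume : Measure E3').toSphere

lemma radialInt' (m : ℕ) :
    ∫ x in Ioi (0:ℝ), x ^ m * rexp (-x^2) = Real.Gamma ((m+1)/2) / 2 := by
  have h2 : (0:ℝ) < 2 := two_pos
  have key := integral_comp_rpow_Ioi_of_pos (p := 2)
    (g := fun y => rexp (-y) * y ^ (((m:ℝ)+1)/2 - 1)) h2
  rw [← Real.Gamma_eq_integral (by positivity : (0:ℝ) < ((m:ℝ)+1)/2)] at key
  rw [show ((m:ℝ)+1)/2 = ((m:ℕ)+1)/2 by norm_num]
  rw [eq_div_iff (two_ne_zero), ← key, ← integral_mul_const]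
  apply setIntegral_congr_fun measurableSet_Ioi
  intro x hx
  have hx0 : (0:ℝ) < x := hx
  simp only [smul_eq_mul]
  have hxr : x ^ (2:ℝ) = x ^ (2:ℕ) := by
    rw [← Real.rpow_natCast x 2]; norm_num
  rw [hxr]
  rw [show x ^ (2:ℕ) = x ^ ((2:ℕ):ℝ) from (Real.rpow_natCast x 2).symm,
    ← Real.rpow_mul hx0.le]
  rw [show ((2:ℕ):ℝ) * (((m:ℝ)+1)/2 - 1) = (m:ℝ) - 1 by push_cast; ring]
  have hone : x ^ ((2:ℝ) - 1) = x := by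
    rw [show (2:ℝ) - 1 = 1 by norm_num, Real.rpow_one]
  rw [hone]
  have hsplit : x ^ m = x * x ^ ((m:ℝ) - 1) := by
    rw [Real.rpow_sub hx0, Real.rpow_one, Real.rpow_natCast,
      mul_div_cancel₀ _ hx0.ne']
  rw [hsplit]; ring

lemma polar3' (n : ℕ) :
    ∫ x : E3', ((x 0)^2 + (x 1)^2)^n * rexp (-‖x‖^2) =
      (∫ y : Metric.sphere (0:E3') 1, (((y:E3') 0)^2 + ((y:E3') 1)^2)^n ∂sphMeas') *
        ∫ r in Ioi (0:ℝ), r^(2*n+2) * rexp (-r^2) := by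
  have hdim : Module.finrank ℝ E3' = 3 := finrank_euclideanSpace_fin
  set g : Metric.sphere (0:E3') 1 → ℝ := fun y => (((y:E3') 0)^2 + ((y:E3') 1)^2)^n with hg
  set f : ℝ → ℝ := fun r => r^(2*n) * rexp (-r^2) with hf
  have step1 : ∫ x : E3', ((x 0)^2 + (x 1)^2)^n * rexp (-‖x‖^2) =
      ∫ x : ({(0:E3')}ᶜ : Set E3'), ((x.1 0)^2 + (x.1 1)^2)^n * rexp (-‖x.1‖^2)
        ∂((volume : Measure E3').comap (↑)) := by
    rw [integral_subtype_comap (measurableSet_singleton _).compl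
        (fun x : E3' => ((x 0)^2 + (x 1)^2)^n * rexp (-‖x‖^2)),
      restrict_compl_singleton]
  have step2 : ∫ x : ({(0:E3')}ᶜ : Set E3'), ((x.1 0)^2 + (x.1 1)^2)^n * rexp (-‖x.1‖^2)
        ∂((volume : Measure E3').comap (↑)) =
      ∫ p : Metric.sphere (0:E3') 1 × Ioi (0:ℝ), g p.1 * f p.2.1
        ∂(sphMeas'.prod (.volumeIoiPow 2)) := by
    have := ((volume : Measure E3').measurePreserving_homeomorphUnitSphereProd).integral_comp
      (Homeomorph.measurableEmbedding _)
      (fun p : Metric.sphere (0:E3') 1 × Ioi (0:ℝ) => g p.1 * f p.2.1)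
    rw [hdim] at this
    rw [← this]
    apply integral_congr_ae
    filter_upwards with x
    have hx : x.1 ≠ 0 := x.2
    have hnorm : ‖x.1‖ ≠ 0 := norm_ne_zero_iff.2 hx
    simp only [homeomorphUnitSphereProd_apply_fst_coe, homeomorphUnitSphereProd_apply_snd_coe,
      hg, hf, PiLp.smul_apply, smul_eq_mul]
    field_simp
    rw [pow_mul, ← mul_pow, div_mul_cancel₀ _ (pow_ne_zero 2 hnorm)]
  have step3 : ∫ p : Metric.sphere (0:E3') 1 × Ioi (0:ℝ), g p.1 * f p.2.1
        ∂(sphMeas'.prod (.volumeIoiPow 2)) =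
      (∫ y, g y ∂sphMeas') * ∫ r : Ioi (0:ℝ), f r.1 ∂(Measure.volumeIoiPow 2) :=
    integral_prod_mul g (fun r : Ioi (0:ℝ) => f r.1)
  have step4 : ∫ r : Ioi (0:ℝ), f r.1 ∂(Measure.volumeIoiPow 2) =
      ∫ r in Ioi (0:ℝ), r^(2*n+2) * rexp (-r^2) := by
    simp only [Measure.volumeIoiPow, ENNReal.ofReal]
    rw [integral_withDensity_eq_integral_smul
      ((measurable_subtype_coe.pow_const _).real_toNNReal),
      integral_subtype_comap measurableSet_Ioi (fun a : ℝ => Real.toNNReal (a^2) • f a)]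
    apply setIntegral_congr_fun measurableSet_Ioi
    intro r hr
    have hr0 : (0:ℝ) < r := hr
    show (r^2).toNNReal • f r = r^(2*n+2) * rexp (-r^2)
    rw [NNReal.smul_def, Real.coe_toNNReal _ (by positivity)]
    simp only [hf, smul_eq_mul]
    ring
  rw [step1, step2, step3, step4]

lemma twoD' (n : ℕ) :
    ∫ y : E2', (‖y‖^2)^n * rexp (-‖y‖^2) = π * (n ! : ℝ) := by
  have h := integral_fun_norm_addHaar (volume : Measure E2')
    (fun r : ℝ => (r^2)^n * rexp (-r^2))
  have hdim : Module.finrank ℝ E2' = 2 := finrank_euclideanSpace_fin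
  rw [hdim] at h
  have hball : ((volume : Measure E2') (Metric.ball 0 1)).toReal = π := by
    rw [EuclideanSpace.volume_ball]
    simp only [Fintype.card_fin, ENNReal.ofReal_one, one_pow, one_mul]
    rw [show ((2:ℕ):ℝ)/2 + 1 = 1 + 1 by norm_num, show (1:ℝ)+1 = 2 by norm_num,
      Real.Gamma_two, div_one, Real.sq_sqrt Real.pi_nonneg,
      ENNReal.toReal_ofReal Real.pi_nonneg]
  rw [h, measureReal_def, hball]
  have hrad : (∫ y in Ioi (0:ℝ), y ^ (2 - 1) • ((y^2)^n * rexp (-y^2))) =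
      (n ! : ℝ) / 2 := by
    have : (∫ y in Ioi (0:ℝ), y ^ (2 - 1) • ((y^2)^n * rexp (-y^2))) =
        ∫ y in Ioi (0:ℝ), y ^ (2*n+1) * rexp (-y^2) := by
      apply setIntegral_congr_fun measurableSet_Ioi
      intro y hy
      show y ^ (2-1) • ((y^2)^n * rexp (-y^2)) = y ^ (2*n+1) * rexp (-y^2)
      rw [smul_eq_mul]; ring
    rw [this, radialInt']
    rw [show ((2*n+1:ℕ):ℝ) = 2*(n:ℝ)+1 by push_cast; ring]
    rw [show (2*(n:ℝ)+1+1)/2 = (n:ℝ)+1 by ring]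
    rw [Real.Gamma_nat_eq_factorial]
  rw [hrad]
  simp only [smul_eq_mul, nsmul_eq_mul]
  push_cast
  ring

lemma norm_sq_E3' (x : E3') : ‖x‖^2 = (x 0)^2 + (x 1)^2 + (x 2)^2 := by
  rw [EuclideanSpace.norm_eq, Real.sq_sqrt (by positivity), Fin.sum_univ_three]
  simp [sq_abs]

lemma norm_sq_E2' (y : E2') : ‖y‖^2 = (y 0)^2 + (y 1)^2 := by
  rw [EuclideanSpace.norm_eq, Real.sq_sqrt (by positivity), Fin.sum_univ_two]
  simp [sq_abs]

lemma gauss3' (n : ℕ) :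
    ∫ x : E3', ((x 0)^2 + (x 1)^2)^n * rexp (-‖x‖^2) =
      Real.sqrt π * (π * (n ! : ℝ)) := by
  have hφ := EuclideanSpace.volume_preserving_symm_measurableEquiv_toLp (Fin 3)
  set H : (Fin 3 → ℝ) → ℝ :=
    fun v => rexp (-(v 2)^2) * (((v 0)^2 + (v 1)^2)^n * rexp (-((v 0)^2 + (v 1)^2))) with hH
  have stepA : ∫ x : E3', ((x 0)^2 + (x 1)^2)^n * rexp (-‖x‖^2) =
      ∫ v : Fin 3 → ℝ, H v := by
    rw [← hφ.integral_comp (MeasurableEquiv.toLp 2 (Fin 3 → ℝ)).symm.measurableEmbedding H]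
    apply integral_congr_ae
    filter_upwards with x
    have : ∀ i, (MeasurableEquiv.toLp 2 (Fin 3 → ℝ)).symm x i = x i := fun i => rfl
    simp only [hH, this]
    rw [norm_sq_E3',
      show -((x 0)^2+(x 1)^2+(x 2)^2) = (-(x 2)^2) + (-((x 0)^2+(x 1)^2)) by ring,
      Real.exp_add]
    ring
  have hψ := measurePreserving_piFinSuccAbove (fun _ : Fin 3 => (volume : Measure ℝ)) 2
  set K : ℝ × (Fin 2 → ℝ) → ℝ :=
    fun p => rexp (-p.1^2) * (((p.2 0)^2 + (p.2 1)^2)^n * rexp (-((p.2 0)^2 + (p.2 1)^2)))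
    with hK
  have stepB : ∫ v : Fin 3 → ℝ, H v =
      ∫ p : ℝ × (Fin 2 → ℝ), K p ∂((volume : Measure ℝ).prod
        (Measure.pi fun _ : Fin 2 => (volume : Measure ℝ))) := by
    rw [← hψ.integral_comp
      (MeasurableEquiv.piFinSuccAbove (fun _ : Fin 3 => ℝ) 2).measurableEmbedding K]
    rw [volume_pi]
    apply integral_congr_ae
    filter_upwards with v
    have h0 : (MeasurableEquiv.piFinSuccAbove (fun _ : Fin 3 => ℝ) 2) v =
        (v 2, fun j => v ((2 : Fin 3).succAbove j)) := rfl
    have hs0 : (2 : Fin 3).succAbove 0 = 0 := by decide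
    have hs1 : (2 : Fin 3).succAbove 1 = 1 := by decide
    simp only [hK, hH, h0, hs0, hs1]
  have stepC : ∫ p : ℝ × (Fin 2 → ℝ), K p ∂((volume : Measure ℝ).prod
        (Measure.pi fun _ : Fin 2 => (volume : Measure ℝ))) =
      (∫ t : ℝ, rexp (-t^2)) *
        ∫ v : Fin 2 → ℝ, ((v 0)^2 + (v 1)^2)^n * rexp (-((v 0)^2 + (v 1)^2)) := by
    rw [hK]
    exact integral_prod_mul (fun t : ℝ => rexp (-t^2))
      (fun v : Fin 2 → ℝ => ((v 0)^2 + (v 1)^2)^n * rexp (-((v 0)^2 + (v 1)^2)))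
  have hφ2 := EuclideanSpace.volume_preserving_symm_measurableEquiv_toLp (Fin 2)
  have stepD : (∫ v : Fin 2 → ℝ, ((v 0)^2 + (v 1)^2)^n * rexp (-((v 0)^2 + (v 1)^2))) =
      π * (n ! : ℝ) := by
    rw [← hφ2.integral_comp (MeasurableEquiv.toLp 2 (Fin 2 → ℝ)).symm.measurableEmbedding
      (fun v : Fin 2 → ℝ => ((v 0)^2 + (v 1)^2)^n * rexp (-((v 0)^2 + (v 1)^2)))]
    rw [← twoD' n]
    apply integral_congr_ae
    filter_upwards with y
    have : ∀ i, (MeasurableEquiv.toLp 2 (Fin 2 → ℝ)).symm y i = y i := fun i => rfl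
    simp only [this, norm_sq_E2']
  have stepE : (∫ t : ℝ, rexp (-t^2)) = Real.sqrt π := by
    have := integral_gaussian 1
    simp only [one_mul, div_one] at this
    rw [← this]
    apply integral_congr_ae
    filter_upwards with t
    norm_num
  rw [stepA, stepB, stepC, stepD, stepE]

noncomputable def uu' (n : ℕ) : ℝ := (n ! : ℝ) / Real.Gamma ((n:ℝ) + 3/2)

lemma Gamma32_pos' (n : ℕ) : 0 < Real.Gamma ((n:ℝ) + 3/2) :=
  Real.Gamma_pos_of_pos (by positivity)

lemma uu_pos' (n : ℕ) : 0 < uu' n := by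
  have h1 := Gamma32_pos' n
  have h2 : (0:ℝ) < (n ! : ℝ) := by exact_mod_cast Nat.factorial_pos n
  unfold uu'; positivity

lemma uu_zero' : uu' 0 = 2 / Real.sqrt π := by
  unfold uu'
  rw [show ((0:ℕ):ℝ) + 3/2 = 1/2 + 1 by norm_num,
    Real.Gamma_add_one (by norm_num), Real.Gamma_one_half_eq]
  rw [Nat.factorial_zero]
  have : Real.sqrt π > 0 := Real.sqrt_pos.mpr Real.pi_pos
  field_simp
  norm_num

lemma uu_succ' (n : ℕ) : uu' (n+1) = uu' n * (((n:ℝ)+1) / ((n:ℝ) + 3/2)) := by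
  unfold uu'
  rw [show (((n+1:ℕ)):ℝ) + 3/2 = ((n:ℝ) + 3/2) + 1 by push_cast; ring]
  rw [Real.Gamma_add_one (by positivity : ((n:ℝ) + 3/2) ≠ 0)]
  rw [Nat.factorial_succ]
  push_cast
  have hΓ := (Gamma32_pos' n).ne'
  field_simp

lemma uu_sq_upper' (n : ℕ) : (uu' n)^2 * ((n:ℝ) + 1) ≤ 4 / π := by
  induction n with
  | zero =>
    rw [uu_zero']
    rw [div_pow, Real.sq_sqrt Real.pi_nonneg]
    norm_num
  | succ n ih =>
    rw [uu_succ']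
    have ht : (0:ℝ) ≤ (n:ℝ) := Nat.cast_nonneg n
    have key : (((n:ℝ)+1) / ((n:ℝ) + 3/2))^2 * (((n:ℕ)+1:ℝ) + 1) ≤ ((n:ℝ) + 1) := by
      rw [div_pow, div_mul_eq_mul_div, div_le_iff₀ (by positivity)]
      nlinarith
    calc (uu' n * (((n:ℝ)+1) / ((n:ℝ) + 3/2)))^2 * (((n+1:ℕ):ℝ) + 1)
        = (uu' n)^2 * ((((n:ℝ)+1) / ((n:ℝ) + 3/2))^2 * (((n:ℕ)+1:ℝ) + 1)) := by
          push_cast; ring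
      _ ≤ (uu' n)^2 * ((n:ℝ) + 1) := mul_le_mul_of_nonneg_left key (by positivity)
      _ ≤ 4 / π := ih

lemma uu_sq_lower' (n : ℕ) : 3 / π ≤ (uu' n)^2 * ((n:ℝ) + 3/4) := by
  induction n with
  | zero =>
    rw [uu_zero', div_pow, Real.sq_sqrt Real.pi_nonneg]
    rw [show ((0:ℕ):ℝ) + 3/4 = 3/4 by norm_num]
    rw [div_mul_eq_mul_div, div_le_div_iff₀ Real.pi_pos Real.pi_pos]
    nlinarith [Real.pi_pos]
  | succ n ih =>
    rw [uu_succ']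
    have ht : (0:ℝ) ≤ (n:ℝ) := Nat.cast_nonneg n
    have key : ((n:ℝ) + 3/4) ≤ (((n:ℝ)+1) / ((n:ℝ) + 3/2))^2 * (((n:ℕ)+1:ℝ) + 3/4) := by
      rw [div_pow, div_mul_eq_mul_div, le_div_iff₀ (by positivity)]
      nlinarith
    calc (3:ℝ)/π ≤ (uu' n)^2 * ((n:ℝ) + 3/4) := ih
      _ ≤ (uu' n)^2 * ((((n:ℝ)+1) / ((n:ℝ) + 3/2))^2 * (((n:ℕ)+1:ℝ) + 3/4)) :=
          mul_le_mul_of_nonneg_left key (by positivity)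
      _ = (uu' n * (((n:ℝ)+1) / ((n:ℝ) + 3/2)))^2 * (((n+1:ℕ):ℝ) + 3/4) := by
          push_cast; ring

noncomputable def SS' (n : ℕ) : ℝ := 2 * Real.sqrt π * π * uu' n

lemma SS_pos' (n : ℕ) : 0 < SS' n := by
  have h1 := uu_pos' n
  have h2 : (0:ℝ) < Real.sqrt π := Real.sqrt_pos.mpr Real.pi_pos
  have h3 := Real.pi_pos
  unfold SS'; positivity

lemma sphInt' (n : ℕ) :
    (∫ y : Metric.sphere (0:E3') 1, (((y:E3') 0)^2 + ((y:E3') 1)^2)^n ∂sphMeas') = SS' n := by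
  have h := polar3' n
  rw [gauss3' n] at h
  have hG : (∫ r in Ioi (0:ℝ), r^(2*n+2) * rexp (-r^2)) = Real.Gamma ((n:ℝ)+3/2) / 2 := by
    rw [radialInt']
    congr 2
    push_cast; ring
  rw [hG] at h
  have hΓ := Gamma32_pos' n
  rw [SS', uu']
  field_simp at h ⊢
  linarith [h]

lemma le_of_sq_le_sq'' {a b : ℝ} (hb : 0 ≤ b) (h : a^2 ≤ b^2) : a ≤ b := by
  nlinarith [sq_nonneg (a-b), sq_nonneg (a+b)]

lemma SS_upper' (n : ℕ) : SS' n * Real.sqrt ((n:ℝ)+1) ≤ 4 * π := by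
  have hπ := Real.pi_pos
  apply le_of_sq_le_sq'' (by positivity)
  rw [mul_pow, Real.sq_sqrt (by positivity)]
  have h := uu_sq_upper' n
  have hs : (SS' n)^2 = 4 * π * π^2 * (uu' n)^2 := by
    rw [SS']
    rw [show (2 * Real.sqrt π * π * uu' n)^2
      = 4 * (Real.sqrt π)^2 * π^2 * (uu' n)^2 by ring, Real.sq_sqrt Real.pi_nonneg]
  rw [hs]
  have : 4 * π * π^2 * (uu' n)^2 * ((n:ℝ)+1) = 4 * π * π^2 * ((uu' n)^2 * ((n:ℝ)+1)) := by ring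
  rw [this]
  calc 4 * π * π^2 * ((uu' n)^2 * ((n:ℝ)+1)) ≤ 4 * π * π^2 * (4/π) :=
        mul_le_mul_of_nonneg_left h (by positivity)
    _ = (4*π)^2 := by field_simp
    _ ≤ (4*π)^2 := le_refl _

lemma SS_lower' (n : ℕ) : 2 * Real.sqrt 3 * π ≤ SS' n * Real.sqrt ((n:ℝ)+1) := by
  have hπ := Real.pi_pos
  apply le_of_sq_le_sq'' (mul_nonneg (SS_pos' n).le (Real.sqrt_nonneg _))
  rw [show (SS' n * Real.sqrt ((n:ℝ)+1))^2 = (SS' n)^2 * ((n:ℝ)+1) by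
    rw [mul_pow, Real.sq_sqrt (by positivity : (0:ℝ) ≤ (n:ℝ)+1)]]
  rw [show (2 * Real.sqrt 3 * π)^2 = 4 * ((Real.sqrt 3)^2) * π^2 by ring,
    Real.sq_sqrt (by norm_num : (0:ℝ) ≤ 3)]
  have hs : (SS' n)^2 = 4 * π * π^2 * (uu' n)^2 := by
    rw [SS']
    rw [show (2 * Real.sqrt π * π * uu' n)^2
      = 4 * (Real.sqrt π)^2 * π^2 * (uu' n)^2 by ring, Real.sq_sqrt Real.pi_nonneg]
  rw [hs]
  have h := uu_sq_lower' n
  have hmono : (uu' n)^2 * ((n:ℝ) + 3/4) ≤ (uu' n)^2 * ((n:ℝ) + 1) :=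
    mul_le_mul_of_nonneg_left (by linarith) (by positivity)
  have h2 : 3/π ≤ (uu' n)^2 * ((n:ℝ)+1) := le_trans h hmono
  calc (4:ℝ) * 3 * π^2 = 4 * π * π^2 * (3/π) := by field_simp
    _ ≤ 4 * π * π^2 * ((uu' n)^2 * ((n:ℝ)+1)) := mul_le_mul_of_nonneg_left h2 (by positivity)
    _ = 4 * π * π^2 * (uu' n)^2 * ((n:ℝ)+1) := by ring


lemma normsq' (n : ℕ) (x : Metric.sphere (0 : E3') 1) :
    ‖(((x : E3') 0 : ℂ) + Complex.I * ((x : E3') 1 : ℂ)) ^ n‖ ^ 2 =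
      (((x:E3') 0)^2 + ((x:E3') 1)^2)^n := by
  have hz : ‖(((x : E3') 0 : ℂ) + Complex.I * ((x : E3') 1 : ℂ))‖ ^ 2 =
      ((x:E3') 0)^2 + ((x:E3') 1)^2 := by
    rw [mul_comm, Complex.sq_norm, Complex.normSq_add_mul_I]
  rw [norm_pow, ← pow_mul, mul_comm n 2, pow_mul, hz]


/-- Optimality of the bilinear estimate on `𝕊²`: for the highest weight spherical harmonics
`e_n(x₁,x₂,x₃) = (x₁ + i x₂)^n` on the unit sphere `𝕊² ⊂ ℝ³` (with its surface measure),
one has `‖e_p e_q‖_{L²} ≥ c min(p,q)^{1/4} ‖e_p‖_{L²} ‖e_q‖_{L²}` for all `p, q ≥ 1`. -/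
theorem stmt_4
    (e : ℕ → Metric.sphere (0 : EuclideanSpace ℝ (Fin 3)) 1 → ℂ)
    (he : ∀ n x, e n x = (((x : EuclideanSpace ℝ (Fin 3)) 0 : ℂ) +
        Complex.I * ((x : EuclideanSpace ℝ (Fin 3)) 1 : ℂ)) ^ n) :
    ∃ c : ℝ, 0 < c ∧ ∀ p q : ℕ, 1 ≤ p → 1 ≤ q →
      c * (min p q : ℝ) ^ (1 / 4 : ℝ) *
          ((∫ x, ‖e p x‖ ^ 2 ∂(volume : Measure (EuclideanSpace ℝ (Fin 3))).toSphere) ^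
            (1 / 2 : ℝ) *
           (∫ x, ‖e q x‖ ^ 2 ∂(volume : Measure (EuclideanSpace ℝ (Fin 3))).toSphere) ^
            (1 / 2 : ℝ)) ≤
        (∫ x, ‖e p x * e q x‖ ^ 2 ∂(volume : Measure (EuclideanSpace ℝ (Fin 3))).toSphere) ^
          (1 / 2 : ℝ) := by
  have hπ := Real.pi_pos
  refine ⟨(1/(8*π)) ^ (1/2 : ℝ), Real.rpow_pos_of_pos (by positivity) _, ?_⟩
  intro p q hp hq
  have hIp : (∫ x, ‖e p x‖ ^ 2 ∂(volume : Measure E3').toSphere) = SS' p := by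
    rw [← sphInt' p]
    apply integral_congr_ae
    filter_upwards with x
    rw [he p x, normsq' p x]
  have hIq : (∫ x, ‖e q x‖ ^ 2 ∂(volume : Measure E3').toSphere) = SS' q := by
    rw [← sphInt' q]
    apply integral_congr_ae
    filter_upwards with x
    rw [he q x, normsq' q x]
  have hIpq : (∫ x, ‖e p x * e q x‖ ^ 2 ∂(volume : Measure E3').toSphere) = SS' (p+q) := by
    rw [← sphInt' (p+q)]
    apply integral_congr_ae
    filter_upwards with x
    rw [he p x, he q x, ← pow_add, normsq' (p+q) x]
  rw [hIp, hIq, hIpq]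
  set M : ℝ := min (p:ℝ) (q:ℝ) with hMdef
  have hM0 : 0 ≤ M := le_min (Nat.cast_nonneg p) (Nat.cast_nonneg q)
  have hMp : M ≤ (p:ℝ) := min_le_left _ _
  have hMq : M ≤ (q:ℝ) := min_le_right _ _
  have hcore : 1/(8*π) * M ^ (1/2 : ℝ) * (SS' p * SS' q) ≤ SS' (p+q) := by
    rw [← Real.sqrt_eq_rpow]
    set a := Real.sqrt ((p:ℝ)+1) with ha
    set b := Real.sqrt ((q:ℝ)+1) with hb
    set d := Real.sqrt ((p:ℝ)+(q:ℝ)+1) with hd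
    have ha0 : 0 < a := Real.sqrt_pos.mpr (by positivity)
    have hb0 : 0 < b := Real.sqrt_pos.mpr (by positivity)
    have hd0 : 0 < d := Real.sqrt_pos.mpr (by positivity)
    have hSpa := SS_upper' p
    have hSqb := SS_upper' q
    have hlow : 2 * Real.sqrt 3 * π ≤ SS' (p+q) * d := by
      have := SS_lower' (p+q)
      rwa [show (((p+q:ℕ)):ℝ) + 1 = (p:ℝ)+(q:ℝ)+1 by push_cast; ring] at this
    have h2 : Real.sqrt M * d ≤ Real.sqrt 2 * (a * b) := by
      rw [hd, ← Real.sqrt_mul hM0, ha, hb, ← Real.sqrt_mul (by positivity : (0:ℝ) ≤ (p:ℝ)+1),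
        ← Real.sqrt_mul (by norm_num : (0:ℝ) ≤ 2)]
      apply Real.sqrt_le_sqrt
      nlinarith [(Nat.cast_nonneg p : (0:ℝ) ≤ (p:ℝ)), (Nat.cast_nonneg q : (0:ℝ) ≤ (q:ℝ))]
    have habd : 0 < a * b * d := by positivity
    rw [← mul_le_mul_iff_of_pos_right habd]
    have hSp := SS_pos' p
    have hSq := SS_pos' q
    have hSpq := SS_pos' (p+q)
    have e1 : SS' q * b * (Real.sqrt M * d) ≤ 4*π * (Real.sqrt 2 * (a*b)) :=
      mul_le_mul hSqb h2 (by positivity) (by positivity)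
    have e2 : (SS' p * a) * (SS' q * b * (Real.sqrt M * d)) ≤
        4*π * (4*π * (Real.sqrt 2 * (a*b))) :=
      mul_le_mul hSpa e1 (by positivity) (by positivity)
    calc 1/(8*π) * Real.sqrt M * (SS' p * SS' q) * (a*b*d)
        = 1/(8*π) * ((SS' p * a) * (SS' q * b * (Real.sqrt M * d))) := by ring
      _ ≤ 1/(8*π) * (4*π * (4*π * (Real.sqrt 2 * (a*b)))) :=
          mul_le_mul_of_nonneg_left e2 (by positivity)
      _ = (2 * Real.sqrt 2 * π) * (a*b) := by field_simp; ring
      _ ≤ (2 * Real.sqrt 3 * π) * (a*b) := by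
          have : Real.sqrt 2 ≤ Real.sqrt 3 := Real.sqrt_le_sqrt (by norm_num)
          apply mul_le_mul_of_nonneg_right _ (by positivity)
          nlinarith
      _ ≤ (SS' (p+q) * d) * (a*b) := mul_le_mul_of_nonneg_right hlow (by positivity)
      _ = SS' (p+q) * (a*b*d) := by ring
  have hLnn : 0 ≤ 1/(8*π) * M ^ (1/2 : ℝ) * (SS' p * SS' q) := by
    have := Real.rpow_nonneg hM0 (1/2 : ℝ)
    have := (SS_pos' p).le
    have := (SS_pos' q).le
    positivity
  have key := Real.rpow_le_rpow hLnn hcore (by norm_num : (0:ℝ) ≤ 1/2)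
  rw [Real.mul_rpow (by positivity) (mul_nonneg (SS_pos' p).le (SS_pos' q).le),
    Real.mul_rpow (by positivity) (Real.rpow_nonneg hM0 _),
    Real.mul_rpow (SS_pos' p).le (SS_pos' q).le,
    ← Real.rpow_mul hM0] at key
  norm_num at key ⊢
  exact key
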